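/- Let p > 2 and let X be a real random variable with E|X|^p < ∞ and EX = 0. Then E[X₊^{p/2}] ≤ (E[X₊^p])^{(p-2)/(2p-2)} · (E|X|/2)^{p/(2p-2)}, where X₊ = max(X,0). -/

import Mathlib

open MeasureTheory

theorem stmt_0 {Ω : Type*} [MeasurableSpace Ω] (μ : Measure Ω) [IsProbabilityMeasure μ]
    (p : ℝ) (hp : 2 < p) (X : Ω → ℝ) (hX : Measurable X)
    (hLp : Integrable (fun ω => |X ω| ^ p) μ) (hint : Integrable X μ)
    (hmean : ∫ ω, X ω ∂μ = 0) :
    ∫ ω, (max (X ω) 0) ^ (p / 2) ∂μ ≤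
      (∫ ω, (max (X ω) 0) ^ p ∂μ) ^ ((p - 2) / (2 * p - 2)) *
        ((∫ ω, |X ω| ∂μ) / 2) ^ (p / (2 * p - 2)) := by
  set Y : Ω → ℝ := fun ω => max (X ω) 0 with hY
  have hYmeas : Measurable Y := hX.max measurable_const
  have hYnn : ∀ ω, 0 ≤ Y ω := fun ω => le_max_right _ _
  have hYabs : ∀ ω, Y ω ≤ |X ω| := fun ω => max_le (le_abs_self _) (abs_nonneg _)
  have hp1 : (1:ℝ) < p := by linarith
  have hp0 : (0:ℝ) < p := by linarith
  have hd : (0:ℝ) < 2 * p - 2 := by linarith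
  set a : ℝ := (p - 2) / (2 * p - 2) with ha
  set b : ℝ := p / (2 * p - 2) with hb
  have ha0 : 0 < a := div_pos (by linarith) hd
  have hb0 : 0 < b := div_pos hp0 hd
  have hd' : (2 * p - 2) ≠ 0 := hd.ne'
  have hab : a + b = 1 := by rw [ha, hb, ← add_div, div_eq_one_iff_eq hd']; ring
  have hsum : p * a + b = p / 2 := by
    rw [ha, hb, mul_div_assoc', ← add_div, div_eq_div_iff hd' two_ne_zero]; ring
  set r : ℝ := 1 / a with hr
  set s : ℝ := 1 / b with hs
  have hr0 : 0 < r := by positivity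
  have hs0 : 0 < s := by positivity
  have hconj : r.HolderConjugate s := by
    refine ⟨?_, hr0, hs0⟩
    · rw [hr, hs, inv_one]
      simp only [one_div, inv_inv]
      exact hab
  -- Integrability facts
  have hYp_int : Integrable (fun ω => Y ω ^ p) μ := by
    refine hLp.mono ((hYmeas.pow measurable_const).aestronglyMeasurable) ?_
    filter_upwards with ω
    rw [Real.norm_eq_abs, Real.norm_eq_abs, abs_of_nonneg (Real.rpow_nonneg (hYnn ω) p),
      abs_of_nonneg (Real.rpow_nonneg (abs_nonneg _) p)]
    exact Real.rpow_le_rpow (hYnn ω) (hYabs ω) hp0.le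
  have hYint : Integrable Y μ := by
    refine hint.abs.mono hYmeas.aestronglyMeasurable ?_
    filter_upwards with ω
    rw [Real.norm_eq_abs, Real.norm_eq_abs, abs_of_nonneg (hYnn ω), abs_abs]
    exact hYabs ω
  have hYMp : MemLp Y (ENNReal.ofReal p) μ := by
    refine (memLp_norm_rpow_iff (q := ENNReal.ofReal p) hYmeas.aestronglyMeasurable
      (by simp [hp0]) (by simp)).1 ?_
    rw [ENNReal.div_self (by simp [hp0]) (by simp), memLp_one_iff_integrable]
    refine hYp_int.congr ?_
    filter_upwards with ω
    rw [Real.norm_eq_abs, abs_of_nonneg (hYnn ω), ENNReal.toReal_ofReal hp0.le]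
  have hY1 : MemLp Y (ENNReal.ofReal 1) μ := by
    rw [ENNReal.ofReal_one, memLp_one_iff_integrable]; exact hYint
  -- the two Hölder factors
  have hpa : (0:ℝ) < p * a := by positivity
  have hMf : MemLp (fun ω => Y ω ^ (p * a)) (ENNReal.ofReal r) μ := by
    have h1 := hYMp.norm_rpow_div (ENNReal.ofReal (p * a))
    have he : ENNReal.ofReal p / ENNReal.ofReal (p * a) = ENNReal.ofReal r := by
      rw [← ENNReal.ofReal_div_of_pos hpa, hr]
      congr 1
      rw [eq_div_iff ha0.ne']
      field_simp
    rw [he] at h1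
    refine h1.ae_eq ?_
    filter_upwards with ω
    rw [Real.norm_eq_abs, abs_of_nonneg (hYnn ω), ENNReal.toReal_ofReal hpa.le]
  have hMg : MemLp (fun ω => Y ω ^ b) (ENNReal.ofReal s) μ := by
    have h1 := hY1.norm_rpow_div (ENNReal.ofReal b)
    have he : ENNReal.ofReal 1 / ENNReal.ofReal b = ENNReal.ofReal s := by
      rw [← ENNReal.ofReal_div_of_pos hb0, hs]
    rw [he] at h1
    refine h1.ae_eq ?_
    filter_upwards with ω
    rw [Real.norm_eq_abs, abs_of_nonneg (hYnn ω), ENNReal.toReal_ofReal hb0.le]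
  -- Hölder
  have hHolder := integral_mul_le_Lp_mul_Lq_of_nonneg hconj
    (Filter.Eventually.of_forall fun ω => Real.rpow_nonneg (hYnn ω) (p * a))
    (Filter.Eventually.of_forall fun ω => Real.rpow_nonneg (hYnn ω) b) hMf hMg
  -- simplify the three integrals in hHolder
  have hL : ∫ ω, Y ω ^ (p * a) * Y ω ^ b ∂μ = ∫ ω, Y ω ^ (p / 2) ∂μ := by
    refine integral_congr_ae (Filter.Eventually.of_forall fun ω => ?_)
    show Y ω ^ (p * a) * Y ω ^ b = Y ω ^ (p / 2)
    rw [← Real.rpow_add' (hYnn ω) (by rw [hsum]; positivity), hsum]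
  have hR1 : ∫ ω, (Y ω ^ (p * a)) ^ r ∂μ = ∫ ω, Y ω ^ p ∂μ := by
    refine integral_congr_ae (Filter.Eventually.of_forall fun ω => ?_)
    show (Y ω ^ (p * a)) ^ r = Y ω ^ p
    rw [← Real.rpow_mul (hYnn ω)]
    congr 1
    rw [hr]
    field_simp
  have hR2 : ∫ ω, (Y ω ^ b) ^ s ∂μ = ∫ ω, Y ω ∂μ := by
    refine integral_congr_ae (Filter.Eventually.of_forall fun ω => ?_)
    show (Y ω ^ b) ^ s = Y ω
    rw [← Real.rpow_mul (hYnn ω), hs]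
    rw [mul_one_div, div_self hb0.ne', Real.rpow_one]
  -- E Y = E|X| / 2
  have hEY : ∫ ω, Y ω ∂μ = (∫ ω, |X ω| ∂μ) / 2 := by
    have hYeq : ∀ ω, Y ω = (X ω + |X ω|) / 2 := by
      intro ω
      rcases le_total (X ω) 0 with h | h
      · rw [hY]; simp only [max_eq_right h, abs_of_nonpos h]; ring
      · rw [hY]; simp only [max_eq_left h, abs_of_nonneg h]; ring
    calc ∫ ω, Y ω ∂μ = ∫ ω, (X ω + |X ω|) / 2 ∂μ := by
          exact integral_congr_ae (Filter.Eventually.of_forall fun ω => hYeq ω)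
      _ = ((∫ ω, X ω ∂μ) + ∫ ω, |X ω| ∂μ) / 2 := by
          rw [integral_div, integral_add hint hint.abs]
      _ = (∫ ω, |X ω| ∂μ) / 2 := by rw [hmean]; ring
  rw [hL, hR1, hR2, hEY] at hHolder
  have h1r : 1 / r = a := by rw [hr]; field_simp
  have h1s : 1 / s = b := by rw [hs]; field_simp
  rw [h1r, h1s] at hHolder
  exact hHolder
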